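/- The Fenchel coupling F(Q, Y) = h(Q) + h*(Y) - tr(YQ), where h is the von Neumann entropy on the unit-trace spectrahedron C and h* its conjugate, satisfies F(Q, Y) ≥ (1/2)‖Q - Q(Y)‖₁² for all Q ∈ C and Hermitian traceless Y, where Q(Y) = exp(Y)/tr(exp(Y)). -/

import Mathlib

open Real

open scoped BigOperators ComplexOrder

/-- Von Neumann entropy h(Q) = tr(Q log Q) = sum of eigenvalue entropies (0 log 0 = 0). -/
noncomputable def vnEntropy {M : ℕ} (Q : Matrix (Fin M) (Fin M) ℂ) : ℝ :=
  if hQ : Q.IsHermitian then ∑ i, hQ.eigenvalues i * Real.log (hQ.eigenvalues i) else 0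

/-- Nuclear (trace) norm of a Hermitian matrix: sum of absolute values of eigenvalues. -/
noncomputable def nuclearNorm {M : ℕ} (Q : Matrix (Fin M) (Fin M) ℂ) : ℝ :=
  if hQ : Q.IsHermitian then ∑ i, |hQ.eigenvalues i| else 0

/-- Spectral norm of a Hermitian matrix: maximum absolute eigenvalue. -/
noncomputable def spectralNorm' {M : ℕ} (Q : Matrix (Fin M) (Fin M) ℂ) : ℝ :=
  if hQ : Q.IsHermitian then ⨆ i, |hQ.eigenvalues i| else 0

/-- The matrix exponential mapping Q(Y) = exp(Y)/tr(exp(Y)). -/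
noncomputable def expMap {M : ℕ} (Y : Matrix (Fin M) (Fin M) ℂ) : Matrix (Fin M) (Fin M) ℂ :=
  ((NormedSpace.exp Y).trace)⁻¹ • NormedSpace.exp Y

/-- The Fenchel coupling F(Q,Y) = h(Q) + h*(Y) - tr(YQ), with h*(Y) = log tr(exp Y). -/
noncomputable def fenchelCoupling {M : ℕ} (Q Y : Matrix (Fin M) (Fin M) ℂ) : ℝ :=
  vnEntropy Q + Real.log ((NormedSpace.exp Y).trace.re) - ((Y * Q).trace).re


noncomputable def phiAux (x : ℝ) : ℝ := Real.log x - (3/2) * ((x-1)*(x+5)) / (x+2)^2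

noncomputable def hAux (x : ℝ) : ℝ := x * Real.log x - x + 1 - (3/2) * (x-1)^2 / (x+2)

lemma hasDerivAt_hAux {x : ℝ} (hx : 0 < x) : HasDerivAt hAux (phiAux x) x := by
  have h2 : (x + 2) ≠ 0 := by positivity
  have h1 : HasDerivAt (fun x : ℝ => x * Real.log x - x + 1) (Real.log x) x := by
    have := ((Real.hasDerivAt_mul_log (ne_of_gt hx)).sub (hasDerivAt_id x)).add_const 1
    exact this.congr_deriv (by ring)
  have h3 : HasDerivAt (fun x : ℝ => (3/2) * (x-1)^2 / (x+2))
      ((3/2) * ((x-1)*(x+5)) / (x+2)^2) x := by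
    have ha : HasDerivAt (fun x : ℝ => (3/2) * (x-1)^2) ((3/2) * (2*(x-1))) x := by
      have : HasDerivAt (fun x : ℝ => (x-1)^2) (2*(x-1)) x := by
        simpa using ((hasDerivAt_id x).sub_const 1).fun_pow 2
      simpa using this.const_mul (3/2)
    have hb : HasDerivAt (fun x : ℝ => x + 2) 1 x := (hasDerivAt_id x).add_const 2
    refine (ha.div hb h2).congr_deriv ?_
    field_simp
    ring
  exact h1.sub h3

lemma hasDerivAt_phiAux {x : ℝ} (hx : 0 < x) :
    HasDerivAt phiAux (1/x - 27/(x+2)^3) x := by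
  have h2 : (x + 2) ≠ 0 := by positivity
  have h1 : HasDerivAt Real.log (1/x) x := by
    simpa [one_div] using Real.hasDerivAt_log (ne_of_gt hx)
  have h3 : HasDerivAt (fun x : ℝ => (3/2) * ((x-1)*(x+5)) / (x+2)^2)
      (27/(x+2)^3) x := by
    have ha : HasDerivAt (fun x : ℝ => (3/2) * ((x-1)*(x+5))) ((3/2)*(2*x+4)) x := by
      have : HasDerivAt (fun x : ℝ => (x-1)*(x+5)) (1*(x+5) + (x-1)*1) x :=
        (((hasDerivAt_id x).sub_const 1).mul ((hasDerivAt_id x).add_const 5))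
      exact (this.const_mul (3/2)).congr_deriv (by ring)
    have hb : HasDerivAt (fun x : ℝ => (x+2)^2) (2*(x+2)) x := by
      simpa using ((hasDerivAt_id x).add_const 2).fun_pow 2
    refine (ha.div hb (by positivity)).congr_deriv ?_
    field_simp
    ring
  exact h1.sub h3

lemma phiAux_deriv_nonneg {x : ℝ} (hx : 0 < x) : 0 ≤ 1/x - 27/(x+2)^3 := by
  rw [sub_nonneg, div_le_div_iff₀ (by positivity) hx]
  nlinarith [sq_nonneg (x-1), sq_nonneg x]

lemma phiAux_mono : MonotoneOn phiAux (Set.Ioi (0:ℝ)) := by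
  refine monotoneOn_of_deriv_nonneg (convex_Ioi 0) ?_ ?_ ?_
  · intro y hy
    exact ((hasDerivAt_phiAux hy).continuousAt).continuousWithinAt
  · intro y hy
    rw [interior_Ioi] at hy
    exact (hasDerivAt_phiAux hy).differentiableAt.differentiableWithinAt
  · intro y hy
    rw [interior_Ioi] at hy
    rw [(hasDerivAt_phiAux hy).deriv]
    exact phiAux_deriv_nonneg hy

lemma phiAux_one : phiAux 1 = 0 := by unfold phiAux; norm_num

lemma hAux_one : hAux 1 = 0 := by unfold hAux; norm_num

lemma hAux_nonneg {x : ℝ} (hx : 0 < x) : 0 ≤ hAux x := by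
  rcases le_or_gt 1 x with h | h
  · -- on [1,∞), hAux monotone since phiAux ≥ 0 there
    have hmono : MonotoneOn hAux (Set.Ici (1:ℝ)) := by
      refine monotoneOn_of_deriv_nonneg (convex_Ici 1) ?_ ?_ ?_
      · intro y hy
        simp only [Set.mem_Ici] at hy
        exact ((hasDerivAt_hAux (by linarith)).continuousAt).continuousWithinAt
      · intro y hy
        rw [interior_Ici] at hy
        simp only [Set.mem_Ioi] at hy
        exact (hasDerivAt_hAux (by linarith)).differentiableAt.differentiableWithinAt
      · intro y hy
        rw [interior_Ici] at hy
        simp only [Set.mem_Ioi] at hy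
        rw [(hasDerivAt_hAux (by linarith)).deriv]
        have := phiAux_mono (Set.mem_Ioi.2 one_pos) (Set.mem_Ioi.2 (by linarith : (0:ℝ) < y)) (le_of_lt hy)
        rw [phiAux_one] at this
        exact this
    have := hmono Set.self_mem_Ici (Set.mem_Ici.2 h) h
    rw [hAux_one] at this
    exact this
  · -- on (0,1], hAux antitone since phiAux ≤ 0 there
    have hanti : AntitoneOn hAux (Set.Icc x 1) := by
      refine antitoneOn_of_deriv_nonpos (convex_Icc x 1) ?_ ?_ ?_
      · intro y hy
        simp only [Set.mem_Icc] at hy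
        exact ((hasDerivAt_hAux (lt_of_lt_of_le hx hy.1)).continuousAt).continuousWithinAt
      · intro y hy
        rw [interior_Icc] at hy
        simp only [Set.mem_Ioo] at hy
        exact (hasDerivAt_hAux (lt_trans hx hy.1)).differentiableAt.differentiableWithinAt
      · intro y hy
        rw [interior_Icc] at hy
        simp only [Set.mem_Ioo] at hy
        rw [(hasDerivAt_hAux (lt_trans hx hy.1)).deriv]
        have := phiAux_mono (Set.mem_Ioi.2 (lt_trans hx hy.1)) (Set.mem_Ioi.2 one_pos) (le_of_lt hy.2)
        rw [phiAux_one] at this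
        exact this
    have := hanti (Set.mem_Icc.2 ⟨le_refl x, le_of_lt h⟩) (Set.mem_Icc.2 ⟨le_of_lt h, le_refl 1⟩) (le_of_lt h)
    rw [hAux_one] at this
    exact this

/-- The Csiszár-type scalar inequality. -/
lemma csiszar {s t : ℝ} (hs : 0 ≤ s) (ht : 0 < t) :
    (3/2) * (s-t)^2 / (s+2*t) ≤ s * Real.log s - s * Real.log t - s + t := by
  rcases eq_or_lt_of_le hs with h | h
  · subst h
    simp only [Real.log_zero, zero_mul, mul_zero, sub_zero, zero_sub, neg_add_eq_sub]
    rw [div_le_iff₀ (by linarith)]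
    nlinarith
  · have hx := hAux_nonneg (div_pos h ht)
    unfold hAux at hx
    have hlog : Real.log (s/t) = Real.log s - Real.log t := Real.log_div (ne_of_gt h) (ne_of_gt ht)
    have ht' : t ≠ 0 := ne_of_gt ht
    have key : 0 ≤ (s * Real.log s - s * Real.log t - s + t)/t - ((3/2) * (s-t)^2 / (s+2*t))/t := by
      have e1 : s/t * Real.log (s/t) - s/t + 1 = (s * Real.log s - s * Real.log t - s + t)/t := by
        rw [hlog]; field_simp
      have hst : s + 2*t ≠ 0 := by positivity
      have e2 : (3/2) * (s/t-1)^2 / (s/t+2) = ((3/2) * (s-t)^2 / (s+2*t))/t := by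
        rw [show s/t - 1 = (s-t)/t by field_simp, show s/t + 2 = (s+2*t)/t by field_simp]
        rw [div_pow]
        field_simp
      rw [e1, e2] at hx
      linarith
    have := mul_le_mul_of_nonneg_right (sub_nonneg.1 key) (le_of_lt ht)
    rw [div_mul_cancel₀ _ ht', div_mul_cancel₀ _ ht'] at this
    linarith

noncomputable def fDiv (s t : ℝ) : ℝ := s * Real.log s - s * Real.log t - s + t

lemma csiszar' {s t : ℝ} (hs : 0 ≤ s) (ht : 0 < t) :
    (3/2) * (s-t)^2 / (s+2*t) ≤ fDiv s t := csiszar hs ht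

lemma fDiv_nonneg {s t : ℝ} (hs : 0 ≤ s) (ht : 0 < t) : 0 ≤ fDiv s t :=
  le_trans (by positivity) (csiszar' hs ht)

lemma core_sum_ineq (M : ℕ) (p q : Fin M → ℝ) (c b e : Fin M → Fin M → ℝ)
    (hp : ∀ i, 0 ≤ p i) (hq : ∀ j, 0 < q j)
    (hc : ∀ i j, 0 ≤ c i j)
    (hb : ∀ i j, 0 ≤ b i j)
    (he : ∀ i j, |e i j| ≤ Real.sqrt (c i j) * b i j)
    (hp1 : ∑ i, p i = 1) (hq1 : ∑ j, q j = 1)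
    (hbrow : ∀ i, ∑ j, (b i j)^2 ≤ 1) (hbcol : ∀ j, ∑ i, (b i j)^2 ≤ 1) :
    (∑ i, ∑ j, e i j * (p i - q j))^2 ≤ 2 * ∑ i, ∑ j, c i j * fDiv (p i) (q j) := by
  set D := ∑ i, ∑ j, c i j * fDiv (p i) (q j) with hD
  have hD0 : 0 ≤ D := by
    apply Finset.sum_nonneg; intro i _; apply Finset.sum_nonneg; intro j _
    exact mul_nonneg (hc i j) (fDiv_nonneg (hp i) (hq j))
  -- abbreviations
  set F : Fin M × Fin M → ℝ := fun ij => b ij.1 ij.2 * Real.sqrt (p ij.1 + 2 * q ij.2) with hF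
  set G : Fin M × Fin M → ℝ := fun ij =>
    Real.sqrt (c ij.1 ij.2) * |p ij.1 - q ij.2| / Real.sqrt (p ij.1 + 2 * q ij.2) with hG
  have hpos : ∀ i j, (0:ℝ) < p i + 2 * q j := fun i j => by
    have := hp i; have := hq j; linarith
  -- step 1: bound the LHS sum by ∑ F*G
  have step1 : |∑ i, ∑ j, e i j * (p i - q j)| ≤ ∑ ij : Fin M × Fin M, F ij * G ij := by
    have hsum : ∑ i, ∑ j, e i j * (p i - q j)
        = ∑ ij : Fin M × Fin M, e ij.1 ij.2 * (p ij.1 - q ij.2) :=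
      (Fintype.sum_prod_type (f := fun ij : Fin M × Fin M => e ij.1 ij.2 * (p ij.1 - q ij.2))).symm
    rw [hsum]
    calc |∑ ij : Fin M × Fin M, e ij.1 ij.2 * (p ij.1 - q ij.2)|
        ≤ ∑ ij : Fin M × Fin M, |e ij.1 ij.2 * (p ij.1 - q ij.2)| := Finset.abs_sum_le_sum_abs _ _
      _ ≤ ∑ ij : Fin M × Fin M, F ij * G ij := by
          apply Finset.sum_le_sum
          rintro ⟨i, j⟩ _
          rw [abs_mul]
          have h1 : |e i j| * |p i - q j| ≤ (Real.sqrt (c i j) * b i j) * |p i - q j| :=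
            mul_le_mul_of_nonneg_right (he i j) (abs_nonneg _)
          refine h1.trans (le_of_eq ?_)
          simp only [hF, hG]
          have hr : Real.sqrt (p i + 2 * q j) ≠ 0 := Real.sqrt_ne_zero'.mpr (hpos i j)
          rw [mul_div_assoc', eq_div_iff hr]
          ring
  -- step 2: Cauchy-Schwarz
  have step2 : (∑ ij : Fin M × Fin M, F ij * G ij)^2 ≤
      (∑ ij : Fin M × Fin M, (F ij)^2) * (∑ ij : Fin M × Fin M, (G ij)^2) :=
    Finset.sum_mul_sq_le_sq_mul_sq _ _ _
  -- step 3: ∑ F² ≤ 3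
  have step3 : ∑ ij : Fin M × Fin M, (F ij)^2 ≤ 3 := by
    have : ∀ ij : Fin M × Fin M, (F ij)^2 = (b ij.1 ij.2)^2 * (p ij.1 + 2 * q ij.2) := by
      rintro ⟨i, j⟩
      simp only [hF, mul_pow, Real.sq_sqrt (le_of_lt (hpos i j))]
    rw [Finset.sum_congr rfl (fun ij _ => this ij)]
    rw [Fintype.sum_prod_type]
    have expand : ∑ i, ∑ j, (b i j)^2 * (p i + 2 * q j)
        = (∑ i, p i * ∑ j, (b i j)^2) + 2 * (∑ j, q j * ∑ i, (b i j)^2) := by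
      have e1 : ∀ i, ∑ j, (b i j)^2 * (p i + 2 * q j)
          = p i * ∑ j, (b i j)^2 + ∑ j, 2 * (q j * (b i j)^2) := by
        intro i
        rw [Finset.mul_sum, ← Finset.sum_add_distrib]
        apply Finset.sum_congr rfl
        intro j _; ring
      rw [Finset.sum_congr rfl (fun i _ => e1 i), Finset.sum_add_distrib]
      have e2 : ∑ i, ∑ j, 2 * (q j * (b i j)^2) = 2 * (∑ j, q j * ∑ i, (b i j)^2) := by
        rw [Finset.sum_comm, Finset.mul_sum]
        apply Finset.sum_congr rfl
        intro j _
        rw [Finset.mul_sum, Finset.mul_sum]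
      rw [e2]
    rw [expand]
    have b1 : ∑ i, p i * ∑ j, (b i j)^2 ≤ 1 := by
      calc ∑ i, p i * ∑ j, (b i j)^2 ≤ ∑ i, p i * 1 := by
            apply Finset.sum_le_sum; intro i _
            exact mul_le_mul_of_nonneg_left (hbrow i) (hp i)
        _ = 1 := by simp [hp1]
    have b2 : ∑ j, q j * ∑ i, (b i j)^2 ≤ 1 := by
      calc ∑ j, q j * ∑ i, (b i j)^2 ≤ ∑ j, q j * 1 := by
            apply Finset.sum_le_sum; intro j _
            exact mul_le_mul_of_nonneg_left (hbcol j) (le_of_lt (hq j))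
        _ = 1 := by simp [hq1]
    linarith
  -- step 4: ∑ G² ≤ (2/3) D
  have step4 : ∑ ij : Fin M × Fin M, (G ij)^2 ≤ (2/3) * D := by
    have : ∀ ij : Fin M × Fin M, (G ij)^2
        = c ij.1 ij.2 * ((p ij.1 - q ij.2)^2 / (p ij.1 + 2 * q ij.2)) := by
      rintro ⟨i, j⟩
      simp only [hG]
      rw [div_pow, mul_pow, Real.sq_sqrt (hc i j), Real.sq_sqrt (le_of_lt (hpos i j)),
        sq_abs, mul_div_assoc]
    rw [Finset.sum_congr rfl (fun ij _ => this ij), hD, Fintype.sum_prod_type, Finset.mul_sum]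
    apply Finset.sum_le_sum
    intro i _
    rw [Finset.mul_sum]
    apply Finset.sum_le_sum
    intro j _
    have key := csiszar' (hp i) (hq j)
    have h23 : (p i - q j)^2 / (p i + 2 * q j) ≤ (2/3) * fDiv (p i) (q j) := by
      have h32 : (3/2) * ((p i - q j)^2 / (p i + 2 * q j)) ≤ fDiv (p i) (q j) := by
        rw [← mul_div_assoc]; exact key
      linarith
    calc c i j * ((p i - q j)^2 / (p i + 2 * q j)) ≤ c i j * ((2/3) * fDiv (p i) (q j)) :=
          mul_le_mul_of_nonneg_left h23 (hc i j)
      _ = 2/3 * (c i j * fDiv (p i) (q j)) := by ring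
  -- combine
  have habs : (∑ i, ∑ j, e i j * (p i - q j))^2 ≤ (∑ ij : Fin M × Fin M, F ij * G ij)^2 := by
    rw [← sq_abs (∑ i, ∑ j, e i j * (p i - q j))]
    apply pow_le_pow_left₀ (abs_nonneg _) step1
  have hFGnn : 0 ≤ ∑ ij : Fin M × Fin M, (F ij)^2 := by positivity
  calc (∑ i, ∑ j, e i j * (p i - q j))^2
      ≤ (∑ ij : Fin M × Fin M, (F ij)^2) * (∑ ij : Fin M × Fin M, (G ij)^2) :=
        habs.trans step2
    _ ≤ 3 * ((2/3) * D) := by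
        apply mul_le_mul step3 step4 (by positivity) (by norm_num)
    _ = 2 * D := by ring

lemma trace_pair (U V : Matrix (Fin M) (Fin M) ℂ) (d e : Fin M → ℝ) :
    ((U * Matrix.diagonal (fun i => (d i : ℂ)) * star U) *
     (V * Matrix.diagonal (fun j => (e j : ℂ)) * star V)).trace
    = ((∑ i, ∑ j, d i * e j * Complex.normSq ((star U * V) i j) : ℝ) : ℂ) := by
  set A := star U * V with hA
  have h1 : (U * Matrix.diagonal (fun i => (d i : ℂ)) * star U) *
      (V * Matrix.diagonal (fun j => (e j : ℂ)) * star V)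
      = U * (Matrix.diagonal (fun i => (d i : ℂ)) * star U * V * Matrix.diagonal (fun j => (e j : ℂ)) * star V) := by
    simp only [Matrix.mul_assoc]
  rw [h1, Matrix.trace_mul_comm]
  have h2 : Matrix.diagonal (fun i => (d i : ℂ)) * star U * V * Matrix.diagonal (fun j => (e j : ℂ)) * star V * U
      = Matrix.diagonal (fun i => (d i : ℂ)) * (A * Matrix.diagonal (fun j => (e j : ℂ)) * star A) := by
    rw [hA, StarMul.star_mul, star_star]
    simp only [Matrix.mul_assoc]
  rw [h2]
  rw [Matrix.trace]
  push_cast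
  apply Finset.sum_congr rfl
  intro i _
  rw [Matrix.diag]
  rw [Matrix.diagonal_mul]
  rw [Matrix.mul_apply]
  rw [Finset.mul_sum]
  apply Finset.sum_congr rfl
  intro j _
  rw [Matrix.mul_diagonal, Matrix.star_apply]
  rw [show A i j * (e j : ℂ) * star (A i j) = ((e j:ℂ)) * (A i j * star (A i j)) by ring]
  rw [RCLike.star_def, Complex.mul_conj]
  push_cast
  ring

lemma unitary_row_sum {A : Matrix (Fin M) (Fin M) ℂ} (h : A * star A = 1) (i : Fin M) :
    ∑ j, Complex.normSq (A i j) = 1 := by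
  have := congrFun (congrFun h i) i
  rw [Matrix.mul_apply] at this
  simp only [Matrix.one_apply_eq] at this
  have : ((∑ j, Complex.normSq (A i j) : ℝ) : ℂ) = 1 := by
    rw [← this]
    push_cast
    apply Finset.sum_congr rfl
    intro j _
    rw [Matrix.star_apply, RCLike.star_def, Complex.mul_conj]
  exact_mod_cast this

lemma unitary_col_sum {A : Matrix (Fin M) (Fin M) ℂ} (h : star A * A = 1) (j : Fin M) :
    ∑ i, Complex.normSq (A i j) = 1 := by
  have := congrFun (congrFun h j) j
  rw [Matrix.mul_apply] at this
  simp only [Matrix.one_apply_eq] at this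
  have : ((∑ i, Complex.normSq (A i j) : ℝ) : ℂ) = 1 := by
    rw [← this]
    push_cast
    apply Finset.sum_congr rfl
    intro i _
    rw [Matrix.star_apply, RCLike.star_def, mul_comm, Complex.mul_conj]
  exact_mod_cast this

lemma trace_diag_left (D : Fin M → ℂ) (Z : Matrix (Fin M) (Fin M) ℂ) :
    (Matrix.diagonal D * Z).trace = ∑ i, D i * Z i i := by
  rw [Matrix.trace]
  apply Finset.sum_congr rfl
  intro i _
  rw [Matrix.diag, Matrix.diagonal_mul]

lemma re_trace_S_diff (S U V : Matrix (Fin M) (Fin M) ℂ) (hS : star S = S)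
    (hUU : U * star U = 1) (hVV : V * star V = 1) (p q : Fin M → ℝ) :
    ((S * ((U * Matrix.diagonal (fun i => (p i:ℂ)) * star U)
        - (V * Matrix.diagonal (fun j => (q j:ℂ)) * star V))).trace).re
    = ∑ i, ∑ j, ((star U * S * V) i j * (starRingEnd ℂ) ((star U * V) i j)).re * (p i - q j) := by
  set B := star U * S * V with hB
  set A := star U * V with hA
  have hstarA : star A = star V * U := by rw [hA, StarMul.star_mul, star_star]
  have hstarB : star B = star V * S * U := by
    rw [hB, StarMul.star_mul, StarMul.star_mul, star_star, hS, Matrix.mul_assoc]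
  have key1 : B * star A = star U * S * U := by
    rw [hB, hstarA, Matrix.mul_assoc (star U * S) V (star V * U),
      ← Matrix.mul_assoc V (star V) U, hVV, Matrix.one_mul]
  have key2 : star B * A = star V * S * V := by
    rw [hstarB, hA, Matrix.mul_assoc (star V * S) U (star U * V),
      ← Matrix.mul_assoc U (star U) V, hUU, Matrix.one_mul]
  have t1 : (S * (U * Matrix.diagonal (fun i => (p i:ℂ)) * star U)).trace
      = ∑ i, (p i : ℂ) * ∑ j, B i j * (starRingEnd ℂ) (A i j) := by
    calc (S * (U * Matrix.diagonal (fun i => (p i:ℂ)) * star U)).trace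
        = ((U * Matrix.diagonal (fun i => (p i:ℂ)) * star U) * S).trace :=
          Matrix.trace_mul_comm _ _
      _ = (U * (Matrix.diagonal (fun i => (p i:ℂ)) * (star U * S))).trace := by
          simp only [Matrix.mul_assoc]
      _ = ((Matrix.diagonal (fun i => (p i:ℂ)) * (star U * S)) * U).trace :=
          Matrix.trace_mul_comm _ _
      _ = (Matrix.diagonal (fun i => (p i:ℂ)) * (B * star A)).trace := by
          rw [key1]; simp only [Matrix.mul_assoc]
      _ = ∑ i, (p i : ℂ) * (B * star A) i i := trace_diag_left _ _
      _ = ∑ i, (p i : ℂ) * ∑ j, B i j * (starRingEnd ℂ) (A i j) := by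
          simp only [Matrix.mul_apply, Matrix.star_apply, RCLike.star_def]
  have t2 : (S * (V * Matrix.diagonal (fun j => (q j:ℂ)) * star V)).trace
      = ∑ j, (q j : ℂ) * ∑ i, (starRingEnd ℂ) (B i j) * A i j := by
    calc (S * (V * Matrix.diagonal (fun j => (q j:ℂ)) * star V)).trace
        = ((V * Matrix.diagonal (fun j => (q j:ℂ)) * star V) * S).trace :=
          Matrix.trace_mul_comm _ _
      _ = (V * (Matrix.diagonal (fun j => (q j:ℂ)) * (star V * S))).trace := by
          simp only [Matrix.mul_assoc]
      _ = ((Matrix.diagonal (fun j => (q j:ℂ)) * (star V * S)) * V).trace :=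
          Matrix.trace_mul_comm _ _
      _ = (Matrix.diagonal (fun j => (q j:ℂ)) * (star B * A)).trace := by
          rw [key2]; simp only [Matrix.mul_assoc]
      _ = ∑ j, (q j : ℂ) * (star B * A) j j := trace_diag_left _ _
      _ = ∑ j, (q j : ℂ) * ∑ i, (starRingEnd ℂ) (B i j) * A i j := by
          simp only [Matrix.mul_apply, Matrix.star_apply, RCLike.star_def]
  rw [Matrix.mul_sub, Matrix.trace_sub, t1, t2]
  rw [Complex.sub_re, Complex.re_sum, Complex.re_sum]
  have r1 : ∀ i, ((p i : ℂ) * ∑ j, B i j * (starRingEnd ℂ) (A i j)).re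
      = p i * ∑ j, (B i j * (starRingEnd ℂ) (A i j)).re := by
    intro i
    rw [Complex.re_ofReal_mul, Complex.re_sum]
  have r2 : ∀ j, ((q j : ℂ) * ∑ i, (starRingEnd ℂ) (B i j) * A i j).re
      = q j * ∑ i, (B i j * (starRingEnd ℂ) (A i j)).re := by
    intro j
    rw [Complex.re_ofReal_mul, Complex.re_sum]
    congr 1
    apply Finset.sum_congr rfl
    intro i _
    have hc : (starRingEnd ℂ) (B i j) * A i j = (starRingEnd ℂ) (B i j * (starRingEnd ℂ) (A i j)) := by
      simp [_root_.map_mul]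
    rw [hc, Complex.conj_re]
  have final : ∀ (E : Fin M → Fin M → ℝ), ∑ i, ∑ j, E i j * (p i - q j)
      = (∑ i, p i * ∑ j, E i j) - (∑ j, q j * ∑ i, E i j) := by
    intro E
    have h1 : ∀ i, ∑ j, E i j * (p i - q j) = p i * ∑ j, E i j - ∑ j, E i j * q j := by
      intro i
      rw [Finset.mul_sum, ← Finset.sum_sub_distrib]
      apply Finset.sum_congr rfl
      intro j _
      ring
    rw [Finset.sum_congr rfl (fun i _ => h1 i), Finset.sum_sub_distrib]
    congr 1
    rw [Finset.sum_comm]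
    apply Finset.sum_congr rfl
    intro j _
    rw [Finset.mul_sum]
    apply Finset.sum_congr rfl
    intro i _
    ring
  rw [Finset.sum_congr rfl (fun i _ => r1 i), Finset.sum_congr rfl (fun j _ => r2 j)]
  rw [final (fun i j => (B i j * (starRingEnd ℂ) (A i j)).re)]

section MatrixHelpers

open Matrix

variable {M : ℕ}

lemma trace_conj_diag (W : Matrix (Fin M) (Fin M) ℂ) (h : star W * W = 1) (d : Fin M → ℝ) :
    (W * Matrix.diagonal (fun i => (d i : ℂ)) * star W).trace = ((∑ i, d i : ℝ) : ℂ) := by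
  rw [Matrix.trace_mul_cycle, h, Matrix.one_mul, Matrix.trace_diagonal]
  push_cast
  rfl

lemma herm_conj_diag (W : Matrix (Fin M) (Fin M) ℂ) (d : Fin M → ℝ) :
    (W * Matrix.diagonal (fun i => (d i : ℂ)) * star W).IsHermitian := by
  unfold Matrix.IsHermitian
  rw [← Matrix.star_eq_conjTranspose, StarMul.star_mul, StarMul.star_mul, star_star]
  have : star (Matrix.diagonal (fun i => (d i : ℂ))) = Matrix.diagonal (fun i => (d i : ℂ)) := by
    ext i j
    by_cases hij : i = j
    · subst hij
      simp [Matrix.star_apply, Matrix.diagonal_apply_eq, RCLike.star_def, Complex.conj_ofReal]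
    · simp [Matrix.star_apply, Matrix.diagonal_apply_ne, hij, Ne.symm hij]
  rw [this, Matrix.mul_assoc]

end MatrixHelpers

section MainAux

open Matrix

variable {M : ℕ}

lemma conj_mul_conj (W X Z : Matrix (Fin M) (Fin M) ℂ) (h : star W * W = 1) :
    (W * X * star W) * (W * Z * star W) = W * (X * Z) * star W := by
  have h1 : (W * X * star W) * (W * Z * star W) = W * (X * ((star W * W) * (Z * star W))) := by
    simp only [Matrix.mul_assoc]
  rw [h1, h, Matrix.one_mul]
  simp only [Matrix.mul_assoc]

lemma mul_sandwich (P V R : Matrix (Fin M) (Fin M) ℂ) (h : V * star V = 1) :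
    P * V * (star V * R) = P * R := by
  rw [Matrix.mul_assoc P V, ← Matrix.mul_assoc V, h, Matrix.one_mul]

end MainAux

/-- The Fenchel coupling satisfies F(Q,Y) ≥ (1/2) ‖Q - Q(Y)‖₁². -/
theorem fenchelCoupling_lower_bound (M : ℕ) (Q Y : Matrix (Fin M) (Fin M) ℂ)
    (hQ : Q.PosSemidef) (hQtr : Q.trace = 1)
    (hY : Y.IsHermitian) (hYtr : Y.trace = 0) :
    (1 / 2) * nuclearNorm (Q - expMap Y) ^ 2 ≤ fenchelCoupling Q Y := by
  rcases Nat.eq_zero_or_pos M with hM0 | hM0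
  · exfalso
    have hz : Q.trace = 0 := by
      subst hM0
      simp [Matrix.trace]
    rw [hz] at hQtr
    exact one_ne_zero hQtr.symm
  haveI : NeZero M := ⟨Nat.pos_iff_ne_zero.mp hM0⟩
  -- spectral data for Q
  have hQh : Q.IsHermitian := hQ.1
  set U : Matrix (Fin M) (Fin M) ℂ :=
    (Matrix.IsHermitian.eigenvectorUnitary hQh : Matrix (Fin M) (Fin M) ℂ) with hUdef
  set p : Fin M → ℝ := hQh.eigenvalues with hpdef
  have hUU : U * star U = 1 :=
    (Matrix.mem_unitaryGroup_iff).mp (Matrix.IsHermitian.eigenvectorUnitary hQh).2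
  have hUU' : star U * U = 1 :=
    (Matrix.mem_unitaryGroup_iff').mp (Matrix.IsHermitian.eigenvectorUnitary hQh).2
  have hQspec : Q = U * Matrix.diagonal (fun i => (p i : ℂ)) * star U := hQh.spectral_theorem
  -- spectral data for Y
  set V : Matrix (Fin M) (Fin M) ℂ :=
    (Matrix.IsHermitian.eigenvectorUnitary hY : Matrix (Fin M) (Fin M) ℂ) with hVdef
  set μ : Fin M → ℝ := hY.eigenvalues with hμdef
  have hVV : V * star V = 1 :=
    (Matrix.mem_unitaryGroup_iff).mp (Matrix.IsHermitian.eigenvectorUnitary hY).2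
  have hVV' : star V * V = 1 :=
    (Matrix.mem_unitaryGroup_iff').mp (Matrix.IsHermitian.eigenvectorUnitary hY).2
  have hYspec : Y = V * Matrix.diagonal (fun j => (μ j : ℂ)) * star V := hY.spectral_theorem
  -- the exponential
  have hVinv : V⁻¹ = star V := Matrix.inv_eq_right_inv hVV
  have hexpY : NormedSpace.exp Y
      = V * Matrix.diagonal (fun j => ((Real.exp (μ j) : ℝ) : ℂ)) * star V := by
    have hVunit : IsUnit V := ⟨⟨V, star V, hVV, hVV'⟩, rfl⟩
    rw [hYspec, ← hVinv, Matrix.exp_conj V _ hVunit, Matrix.exp_diagonal]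
    have hfun : NormedSpace.exp (fun j : Fin M => ((μ j : ℝ) : ℂ))
        = fun j => ((Real.exp (μ j) : ℝ) : ℂ) := by
      funext j
      rw [Pi.coe_exp, ← congrFun Complex.exp_eq_exp_ℂ ((μ j : ℝ) : ℂ)]
      exact (Complex.ofReal_exp _).symm
    rw [hfun]
  set t : ℝ := ∑ j, Real.exp (μ j) with htdef
  have ht : 0 < t := Finset.sum_pos (fun j _ => Real.exp_pos _) Finset.univ_nonempty
  have htrexp : (NormedSpace.exp Y).trace = (t : ℂ) := by
    rw [hexpY]
    exact trace_conj_diag V hVV' _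
  set qv : Fin M → ℝ := fun j => Real.exp (μ j) / t with hqvdef
  have hqvpos : ∀ j, 0 < qv j := fun j => div_pos (Real.exp_pos _) ht
  have hqvsum : ∑ j, qv j = 1 := by
    rw [hqvdef, ← Finset.sum_div, ← htdef, div_self (ne_of_gt ht)]
  have hσ : expMap Y = V * Matrix.diagonal (fun j => (qv j : ℂ)) * star V := by
    rw [expMap, htrexp, hexpY, ← Matrix.smul_mul, ← Matrix.mul_smul, ← Matrix.diagonal_smul]
    have hfun : ((t:ℂ))⁻¹ • (fun j : Fin M => ((Real.exp (μ j) : ℝ) : ℂ))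
        = fun j => ((qv j : ℝ) : ℂ) := by
      funext j
      rw [Pi.smul_apply, smul_eq_mul, hqvdef]
      push_cast
      ring
    rw [hfun]
  have hσH : (expMap Y).IsHermitian := by
    rw [hσ]; exact herm_conj_diag V qv
  -- spectral data for the difference
  have hΔ : (Q - expMap Y).IsHermitian := hQh.sub hσH
  set W : Matrix (Fin M) (Fin M) ℂ :=
    (Matrix.IsHermitian.eigenvectorUnitary hΔ : Matrix (Fin M) (Fin M) ℂ) with hWdef
  set δ : Fin M → ℝ := hΔ.eigenvalues with hδdef
  have hWW : W * star W = 1 :=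
    (Matrix.mem_unitaryGroup_iff).mp (Matrix.IsHermitian.eigenvectorUnitary hΔ).2
  have hWW' : star W * W = 1 :=
    (Matrix.mem_unitaryGroup_iff').mp (Matrix.IsHermitian.eigenvectorUnitary hΔ).2
  have hΔspec : Q - expMap Y = W * Matrix.diagonal (fun k => (δ k : ℂ)) * star W :=
    hΔ.spectral_theorem
  -- sign matrix
  set ε : Fin M → ℝ := fun k => if δ k < 0 then (-1:ℝ) else 1 with hεdef
  have hεδ : ∀ k, ε k * δ k = |δ k| := by
    intro k
    rw [hεdef]
    by_cases h : δ k < 0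
    · simp only [if_pos h]
      rw [abs_of_neg h]; ring
    · simp only [if_neg h]
      rw [abs_of_nonneg (not_lt.mp h), one_mul]
  have hεsq : ∀ k, (ε k : ℂ) * (ε k : ℂ) = 1 := by
    intro k
    rw [hεdef]
    by_cases h : δ k < 0 <;> simp [h]
  set S : Matrix (Fin M) (Fin M) ℂ :=
    W * Matrix.diagonal (fun k => (ε k : ℂ)) * star W with hSdef
  have hSherm : star S = S := by
    rw [Matrix.star_eq_conjTranspose]
    exact herm_conj_diag W ε
  have hSS : S * S = 1 := by
    rw [hSdef, conj_mul_conj W _ _ hWW', Matrix.diagonal_mul_diagonal]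
    have : Matrix.diagonal (fun k => (ε k : ℂ) * (ε k : ℂ)) = 1 := by
      rw [show (fun k => (ε k : ℂ) * (ε k : ℂ)) = fun _ => (1:ℂ) from funext hεsq]
      exact Matrix.diagonal_one
    rw [this, Matrix.mul_one, hWW]
  -- overlap matrices
  set A : Matrix (Fin M) (Fin M) ℂ := star U * V with hAdef
  set B : Matrix (Fin M) (Fin M) ℂ := star U * S * V with hBdef
  have hstarA : star A = star V * U := by rw [hAdef, StarMul.star_mul, star_star]
  have hstarB : star B = star V * (S * U) := by
    rw [hBdef, StarMul.star_mul, StarMul.star_mul, star_star, hSherm]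
  have hA1 : A * star A = 1 := by
    rw [hAdef, hstarA, show star V * U = star V * U from rfl]
    rw [show (star U * V) * (star V * U) = star U * V * (star V * U) from rfl]
    rw [mul_sandwich (star U) V U hVV, hUU']
  have hA2 : star A * A = 1 := by
    rw [hAdef, hstarA]
    rw [mul_sandwich (star V) U V hUU, hVV']
  have hB1 : B * star B = 1 := by
    rw [hBdef, hstarB]
    rw [mul_sandwich (star U * S) V (S * U) hVV]
    rw [Matrix.mul_assoc (star U) S (S * U), ← Matrix.mul_assoc S S U, hSS, Matrix.one_mul, hUU']
  have hB2 : star B * B = 1 := by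
    rw [hBdef, hstarB, Matrix.mul_assoc (star U) S V]
    rw [show star V * (S * U) * (star U * (S * V))
        = star V * S * U * (star U * (S * V)) from by rw [Matrix.mul_assoc (star V) S U]]
    rw [mul_sandwich (star V * S) U (S * V) hUU]
    rw [Matrix.mul_assoc (star V) S (S * V), ← Matrix.mul_assoc S S V, hSS, Matrix.one_mul, hVV']
  -- scalar data
  set c : Fin M → Fin M → ℝ := fun i j => Complex.normSq (A i j) with hcdef
  set b : Fin M → Fin M → ℝ := fun i j => Real.sqrt (Complex.normSq (B i j)) with hbdef
  set e : Fin M → Fin M → ℝ := fun i j => (B i j * (starRingEnd ℂ) (A i j)).re with hedef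
  have hc0 : ∀ i j, 0 ≤ c i j := fun i j => Complex.normSq_nonneg _
  have hb0 : ∀ i j, 0 ≤ b i j := fun i j => Real.sqrt_nonneg _
  have hcrow : ∀ i, ∑ j, c i j = 1 := unitary_row_sum hA1
  have hccol : ∀ j, ∑ i, c i j = 1 := unitary_col_sum hA2
  have hbrow : ∀ i, ∑ j, (b i j)^2 ≤ 1 := by
    intro i
    have : ∀ j, (b i j)^2 = Complex.normSq (B i j) := fun j =>
      Real.sq_sqrt (Complex.normSq_nonneg _)
    rw [Finset.sum_congr rfl (fun j _ => this j), unitary_row_sum hB1 i]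
  have hbcol : ∀ j, ∑ i, (b i j)^2 ≤ 1 := by
    intro j
    have : ∀ i, (b i j)^2 = Complex.normSq (B i j) := fun i =>
      Real.sq_sqrt (Complex.normSq_nonneg _)
    rw [Finset.sum_congr rfl (fun i _ => this i), unitary_col_sum hB2 j]
  have he : ∀ i j, |e i j| ≤ Real.sqrt (c i j) * b i j := by
    intro i j
    rw [hedef, hcdef, hbdef]
    calc |(B i j * (starRingEnd ℂ) (A i j)).re|
        ≤ ‖B i j * (starRingEnd ℂ) (A i j)‖ := Complex.abs_re_le_norm _
      _ = ‖B i j‖ * ‖A i j‖ := by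
          rw [norm_mul, Complex.norm_conj]
      _ = Real.sqrt (Complex.normSq (A i j)) * Real.sqrt (Complex.normSq (B i j)) := by
          rw [Complex.norm_def, Complex.norm_def]; ring
  -- eigenvalue facts for Q
  have hp0 : ∀ i, 0 ≤ p i := fun i => hQ.eigenvalues_nonneg i
  have hp1 : ∑ i, p i = 1 := by
    have h := trace_conj_diag U hUU' p
    rw [← hQspec, hQtr] at h
    exact_mod_cast h.symm
  -- entropy
  have hent : vnEntropy Q = ∑ i, p i * Real.log (p i) := by
    rw [vnEntropy, dif_pos hQh]
  -- trace of Y * Q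
  have htrYQ : ((Y * Q).trace).re = ∑ i, ∑ j, c i j * p i * μ j := by
    rw [hYspec, hQspec, trace_pair V U μ p, Complex.ofReal_re, Finset.sum_comm]
    apply Finset.sum_congr rfl
    intro i _
    apply Finset.sum_congr rfl
    intro j _
    have hVU : (star V * U) j i = (starRingEnd ℂ) (A i j) := by
      rw [show star V * U = star A from hstarA.symm, Matrix.star_apply, RCLike.star_def]
    rw [hVU, Complex.normSq_conj, hcdef]
    ring
  -- the Fenchel coupling as a double sum
  have hlogq : ∀ j, Real.log (qv j) = μ j - Real.log t := by
    intro j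
    rw [hqvdef]
    rw [Real.log_div (Real.exp_ne_zero _) (ne_of_gt ht), Real.log_exp]
  have rowsum : ∀ (K : Fin M → ℝ), ∑ i, ∑ j, c i j * K i = ∑ i, K i := by
    intro K
    apply Finset.sum_congr rfl
    intro i _
    rw [← Finset.sum_mul, hcrow i, one_mul]
  have colsum : ∀ (L : Fin M → ℝ), ∑ i, ∑ j, c i j * L j = ∑ j, L j := by
    intro L
    rw [Finset.sum_comm]
    apply Finset.sum_congr rfl
    intro j _
    rw [← Finset.sum_mul, hccol j, one_mul]
  have hF : fenchelCoupling Q Y = ∑ i, ∑ j, c i j * fDiv (p i) (qv j) := by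
    have term : ∀ i j, c i j * fDiv (p i) (qv j)
        = c i j * (p i * Real.log (p i)) - c i j * p i * μ j
          + c i j * (Real.log t * p i) - c i j * p i + c i j * qv j := by
      intro i j
      rw [fDiv, hlogq j]
      ring
    have expand : ∑ i, ∑ j, c i j * fDiv (p i) (qv j)
        = (∑ i, ∑ j, c i j * (p i * Real.log (p i)))
          - (∑ i, ∑ j, c i j * p i * μ j)
          + (∑ i, ∑ j, c i j * (Real.log t * p i))
          - (∑ i, ∑ j, c i j * p i)
          + (∑ i, ∑ j, c i j * qv j) := by
      rw [Finset.sum_congr rfl (fun i _ => Finset.sum_congr rfl (fun j _ => term i j))]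
      simp only [Finset.sum_add_distrib, Finset.sum_sub_distrib]
    rw [expand, rowsum (fun i => p i * Real.log (p i)), rowsum (fun i => Real.log t * p i),
      rowsum p, colsum qv, hp1, hqvsum]
    have hlt : ∑ i, Real.log t * p i = Real.log t := by
      rw [← Finset.mul_sum, hp1, mul_one]
    rw [hlt]
    rw [fenchelCoupling, hent, htrexp, Complex.ofReal_re, htrYQ]
    ring
  -- nuclear norm as eigenvalue sum
  have hnn : nuclearNorm (Q - expMap Y) = ∑ k, |δ k| := by
    rw [nuclearNorm, dif_pos hΔ]
  -- trace of S * Δ, computed two ways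
  have hSΔ1 : ((S * (Q - expMap Y)).trace).re = ∑ i, ∑ j, e i j * (p i - qv j) := by
    rw [hQspec, hσ]
    exact re_trace_S_diff S U V hSherm hUU hVV p qv
  have hSΔ2 : ((S * (Q - expMap Y)).trace).re = ∑ k, |δ k| := by
    rw [hΔspec, hSdef, conj_mul_conj W _ _ hWW', Matrix.diagonal_mul_diagonal]
    have hdd : (fun k => (ε k : ℂ) * (δ k : ℂ)) = fun k => ((|δ k| : ℝ) : ℂ) := by
      funext k
      rw [← Complex.ofReal_mul, hεδ k]
    rw [hdd, trace_conj_diag W hWW' (fun k => |δ k|), Complex.ofReal_re]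
  -- put everything together
  have key := core_sum_ineq M p qv c b e hp0 hqvpos hc0 hb0 he hp1 hqvsum hbrow hbcol
  rw [hnn, hF]
  rw [← hSΔ1, hSΔ2] at key
  nlinarith [key]
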